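/- Let f: ℝⁿ → ℝᵈ be measurable with ‖f(x)‖₂ ≤ 1 for all x, let σ > 0, let g(x) = E_{ε ~ N(0, σ²I)}[f(x + ε)], and let c₁ ≠ c₂ be unit vectors in ℝᵈ. Define φ(x) = ⟨g(x), c₁ - c₂⟩/(2‖c₁ - c₂‖₂) + 1/2. If φ(x) > 1/2 (equivalently ‖g(x) - c₁‖₂ < ‖g(x) - c₂‖₂), then for every perturbation δ with ‖δ‖₂ < σ·Φ⁻¹(φ(x)), we have ‖g(x + δ) - c₁‖₂ < ‖g(x + δ) - c₂‖₂. -/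

import Mathlib

open MeasureTheory ProbabilityTheory

/-- The isotropic Gaussian measure `N(0, σ²I)` on `ℝⁿ` (as `EuclideanSpace`). -/
noncomputable def gaussMeasure (n : ℕ) (σ : ℝ) : Measure (EuclideanSpace ℝ (Fin n)) :=
  (Measure.pi fun _ : Fin n => gaussianReal 0 (σ ^ 2).toNNReal).map
    (EuclideanSpace.equiv (Fin n) ℝ).symm

/-- The standard Gaussian cumulative distribution function `Φ`. -/
noncomputable def stdGaussCDF : ℝ → ℝ := fun t => cdf (gaussianReal 0 1) t

/-- The inverse `Φ⁻¹` of the standard Gaussian CDF. -/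
noncomputable def stdGaussCDFInv : ℝ → ℝ := Function.invFun stdGaussCDF

section Aux

open Real Set Filter
open scoped NNReal ENNReal

/-! ### One-dimensional facts about the standard Gaussian CDF -/

lemma stdGaussCDF_mono : Monotone stdGaussCDF := monotone_cdf _

lemma stdGaussCDF_eq (t : ℝ) : stdGaussCDF t = ((gaussianReal 0 1) (Iic t)).toReal :=
  cdf_eq_real _ t

lemma gaussianReal_singleton (v : ℝ≥0) (hv : v ≠ 0) (t : ℝ) : gaussianReal 0 v {t} = 0 := by
  rw [gaussianReal_of_var_ne_zero _ hv, withDensity_apply _ (measurableSet_singleton t)]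
  simp

lemma gaussianReal_map_neg : (gaussianReal 0 1).map (fun x : ℝ => -x) = gaussianReal 0 1 := by
  have : (fun x : ℝ => -x) = ((-1 : ℝ) * ·) := by funext x; ring
  rw [this, gaussianReal_map_const_mul]
  congr 1
  · norm_num
  · ext
    norm_num

lemma stdGaussCDF_zero : stdGaussCDF 0 = 1 / 2 := by
  have h1 : gaussianReal 0 1 (Iic 0) = gaussianReal 0 1 (Ici 0) := by
    conv_rhs => rw [← _root_.gaussianReal_map_neg]
    rw [Measure.map_apply measurable_neg measurableSet_Ici]
    congr 1
    ext y; simp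
  have h2 : gaussianReal 0 1 (Iic 0) + gaussianReal 0 1 (Ici 0)
      = 1 + gaussianReal 0 1 {0} := by
    rw [← measure_union_add_inter _ measurableSet_Ici, Iic_union_Ici, Iic_inter_Ici,
      Icc_self, measure_univ]
  rw [gaussianReal_singleton 1 one_ne_zero, add_zero, ← h1] at h2
  have h3 : (2 : ℝ≥0∞) * gaussianReal 0 1 (Iic 0) = 1 := by rw [two_mul, h2]
  rw [stdGaussCDF_eq]
  have := congrArg ENNReal.toReal h3
  rw [ENNReal.toReal_mul] at this
  norm_num at this
  linarith

lemma stdGaussCDF_sub_eq (a b : ℝ) (hab : a ≤ b) :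
    stdGaussCDF b - stdGaussCDF a = ∫ t in a..b, gaussianPDFReal 0 1 t := by
  have hsplit : gaussianReal 0 1 (Iic a) + gaussianReal 0 1 (Ioc a b)
      = gaussianReal 0 1 (Iic b) := by
    rw [← measure_union (Iic_disjoint_Ioc le_rfl) measurableSet_Ioc, Iic_union_Ioc_eq_Iic hab]
  have hioc : gaussianReal 0 1 (Ioc a b)
      = ENNReal.ofReal (∫ t in Ioc a b, gaussianPDFReal 0 1 t) := by
    rw [gaussianReal_of_var_ne_zero _ one_ne_zero, withDensity_apply _ measurableSet_Ioc,
      gaussianPDF_def, ← ofReal_integral_eq_lintegral_ofReal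
        ((integrable_gaussianPDFReal 0 1).integrableOn)
        (ae_of_all _ fun t => gaussianPDFReal_nonneg 0 1 t)]
  have hfin : ∀ s : Set ℝ, gaussianReal 0 1 s ≠ ⊤ := fun s => measure_ne_top _ s
  have := congrArg ENNReal.toReal hsplit
  rw [ENNReal.toReal_add (hfin _) (hfin _)] at this
  rw [stdGaussCDF_eq, stdGaussCDF_eq, ← this, hioc, ENNReal.toReal_ofReal
    (setIntegral_nonneg measurableSet_Ioc fun t _ => gaussianPDFReal_nonneg 0 1 t),
    intervalIntegral.integral_of_le hab]
  ring

lemma stdGaussCDF_eq_primitive (t : ℝ) :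
    stdGaussCDF t = 1 / 2 + ∫ s in (0:ℝ)..t, gaussianPDFReal 0 1 s := by
  have h0 : stdGaussCDF 0 = 1/2 := stdGaussCDF_zero
  rcases le_total 0 t with h | h
  · have := stdGaussCDF_sub_eq 0 t h; linarith
  · have := stdGaussCDF_sub_eq t 0 h
    rw [intervalIntegral.integral_symm] at this
    linarith

lemma stdGaussCDF_continuous : Continuous stdGaussCDF := by
  have : Continuous fun t => ∫ s in (0:ℝ)..t, gaussianPDFReal 0 1 s :=
    intervalIntegral.continuous_primitive
      (fun a b => (integrable_gaussianPDFReal 0 1).intervalIntegrable) 0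
  rw [show stdGaussCDF = fun t => 1 / 2 + ∫ s in (0:ℝ)..t, gaussianPDFReal 0 1 s from
    funext stdGaussCDF_eq_primitive]
  exact continuous_const.add this

lemma stdGaussCDF_strictMono : StrictMono stdGaussCDF := by
  intro a b hab
  have h := stdGaussCDF_sub_eq a b hab.le
  have hpos : 0 < ∫ t in a..b, gaussianPDFReal 0 1 t :=
    intervalIntegral.intervalIntegral_pos_of_pos
      ((integrable_gaussianPDFReal 0 1).intervalIntegrable)
      (fun t => gaussianPDFReal_pos 0 1 t one_ne_zero) hab
  linarith

lemma stdGaussCDF_lt_one (t : ℝ) : stdGaussCDF t < 1 :=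
  lt_of_lt_of_le (stdGaussCDF_strictMono (lt_add_one t)) (cdf_le_one _ _)

lemma stdGaussCDF_surjOn (p : ℝ) (hp1 : 1/2 < p) (hp2 : p < 1) :
    ∃ t, 0 < t ∧ stdGaussCDF t = p := by
  have h0 : stdGaussCDF 0 = 1/2 := stdGaussCDF_zero
  have h1 : Tendsto stdGaussCDF atTop (nhds 1) := tendsto_cdf_atTop _
  obtain ⟨T', hT'⟩ := (h1.eventually (eventually_gt_nhds hp2)).exists
  set T := max 0 T' with hTdef
  have hT : p < stdGaussCDF T := lt_of_lt_of_le hT' (stdGaussCDF_mono (le_max_right _ _))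
  have hT0 : (0:ℝ) ≤ T := le_max_left _ _
  obtain ⟨t, ht, hteq⟩ := intermediate_value_Icc hT0 stdGaussCDF_continuous.continuousOn
    (by constructor <;> [linarith; linarith] : p ∈ Icc (stdGaussCDF 0) (stdGaussCDF T))
  refine ⟨t, ?_, hteq⟩
  rcases eq_or_lt_of_le ht.1 with h | h
  · exfalso; rw [← h] at hteq; linarith
  · exact h

/-! ### The n-dimensional Gaussian measure as a density w.r.t. Lebesgue -/

lemma lintegral_pi_prod {n : ℕ} (μ : Fin n → Measure ℝ) [∀ i, SigmaFinite (μ i)]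
    (g : Fin n → ℝ → ℝ≥0∞) (hg : ∀ i, Measurable (g i)) :
    ∫⁻ x, ∏ i, g i (x i) ∂Measure.pi μ = ∏ i, ∫⁻ t, g i t ∂μ i := by
  induction n with
  | zero => simp [Measure.pi_of_empty]
  | succ n ih =>
      have h := (measurePreserving_piFinSuccAbove μ 0).symm
      calc ∫⁻ x, ∏ i, g i (x i) ∂Measure.pi μ
          = ∫⁻ y : ℝ × (Fin n → ℝ), g 0 y.1 * ∏ i : Fin n, g i.succ (y.2 i)
              ∂((μ 0).prod (Measure.pi fun j => μ (Fin.succAbove 0 j))) := by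
            rw [← h.lintegral_comp]
            · congr 1
              funext y
              rw [Fin.prod_univ_succ]
              simp [MeasurableEquiv.piFinSuccAbove_symm_apply, Fin.insertNthEquiv,
                Fin.insertNth_zero, Fin.zero_succAbove]
            · exact Finset.measurable_prod _ fun i _ => (hg i).comp (measurable_pi_apply i)
        _ = (∫⁻ t, g 0 t ∂μ 0) * ∏ i : Fin n, ∫⁻ t, g i.succ t ∂μ (Fin.succAbove 0 i) := by
            rw [lintegral_prod_mul (f := g 0) (g := fun y : Fin n → ℝ => ∏ i, g i.succ (y i))
              (hg 0).aemeasurable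
              (Finset.measurable_prod _ fun i _ => (hg i.succ).comp (measurable_pi_apply i)).aemeasurable]
            have := ih (fun j => μ (Fin.succAbove 0 j)) (fun j => g j.succ) (fun j => hg j.succ)
            rw [show (fun j : Fin n => μ (Fin.succAbove 0 j)) = fun j => μ j.succ from rfl] at this ⊢
            rw [this]
        _ = ∏ i, ∫⁻ t, g i t ∂μ i := by
            rw [Fin.prod_univ_succ]
            rfl

lemma pi_withDensity {n : ℕ} (μ : Fin n → Measure ℝ) [∀ i, SigmaFinite (μ i)]
    (f : Fin n → ℝ → ℝ≥0∞) (hf : ∀ i, Measurable (f i))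
    [∀ i, SigmaFinite ((μ i).withDensity (f i))] :
    Measure.pi (fun i => (μ i).withDensity (f i)) =
      (Measure.pi μ).withDensity (fun x => ∏ i, f i (x i)) := by
  refine Measure.pi_eq (μ := fun i => (μ i).withDensity (f i)) fun s hs => ?_
  rw [withDensity_apply _ (MeasurableSet.univ_pi hs),
    ← lintegral_indicator (MeasurableSet.univ_pi hs) _]
  have key : (Set.pi univ s).indicator (fun x => ∏ i, f i (x i))
      = fun x => ∏ i, (s i).indicator (f i) (x i) := by
    funext x
    by_cases hx : x ∈ Set.pi univ s
    · rw [indicator_of_mem hx]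
      exact Finset.prod_congr rfl fun i _ => (indicator_of_mem (hx i (mem_univ i)) _).symm
    · rw [indicator_of_notMem hx]
      have : ∃ i, x i ∉ s i := by simpa [Set.mem_pi] using hx
      obtain ⟨i, hi⟩ := this
      exact (Finset.prod_eq_zero (Finset.mem_univ i) (by rw [indicator_of_notMem hi])).symm
  rw [key, lintegral_pi_prod μ _ (fun i => (hf i).indicator (hs i))]
  exact Finset.prod_congr rfl fun i _ => by
    rw [lintegral_indicator (hs i) _, ← withDensity_apply _ (hs i)]

lemma map_withDensity_equiv {α β : Type*} [MeasurableSpace α] [MeasurableSpace β]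
    (e : α ≃ᵐ β) (μ : Measure α) (g : β → ℝ≥0∞) (hg : Measurable g) :
    Measure.map e (μ.withDensity (fun a => g (e a))) = (Measure.map e μ).withDensity g := by
  ext s hs
  rw [Measure.map_apply e.measurable hs, withDensity_apply _ hs,
    withDensity_apply _ (e.measurable hs), setLIntegral_map hs hg e.measurable]

lemma pi_map_eval {n : ℕ} (μ : Fin n → Measure ℝ) [∀ i, IsProbabilityMeasure (μ i)] (i : Fin n) :
    Measure.map (fun x => x i) (Measure.pi μ) = μ i := by
  ext s hs
  rw [Measure.map_apply (measurable_pi_apply i) hs]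
  have : (fun x : Fin n → ℝ => x i) ⁻¹' s = Set.pi univ (Function.update (fun _ => univ) i s) :=
    Set.eval_preimage.trans rfl
  rw [this, Measure.pi_pi]
  refine Finset.prod_eq_single_of_mem i (Finset.mem_univ i) (fun j _ hj => ?_) |>.trans ?_
  · rw [Function.update_of_ne hj]; exact measure_univ
  · rw [Function.update_self]

variable {n : ℕ} {σ : ℝ}

lemma hV_ne (hσ : 0 < σ) : (σ^2).toNNReal ≠ 0 := by
  simp only [ne_eq, Real.toNNReal_eq_zero, not_le]
  positivity

lemma hV_coe (hσ : 0 < σ) : ((σ^2).toNNReal : ℝ) = σ^2 :=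
  Real.coe_toNNReal _ (by positivity)

lemma measurable_gaussProd :
    Measurable (fun x : EuclideanSpace ℝ (Fin n) => ∏ i, gaussianPDF 0 (σ^2).toNNReal (x i)) :=
  Finset.measurable_prod _ fun i _ => (measurable_gaussianPDF _ _).comp ((measurable_pi_apply i).comp (WithLp.measurable_ofLp 2 _))

lemma gaussMeasure_eq (hσ : 0 < σ) :
    gaussMeasure n σ = (volume : Measure (EuclideanSpace ℝ (Fin n))).withDensity
      (fun x => ∏ i, gaussianPDF 0 (σ^2).toNNReal (x i)) := by
  unfold gaussMeasure
  have h1 : (fun _ : Fin n => gaussianReal 0 (σ^2).toNNReal)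
      = fun _ : Fin n => ((volume : Measure ℝ).withDensity (gaussianPDF 0 (σ^2).toNNReal)) :=
    funext fun _ => gaussianReal_of_var_ne_zero 0 (hV_ne hσ)
  haveI : ∀ i : Fin n, SigmaFinite (((fun _ : Fin n => (volume : Measure ℝ)) i).withDensity
      ((fun _ : Fin n => gaussianPDF 0 (σ^2).toNNReal) i)) := by
    intro i
    show SigmaFinite ((volume : Measure ℝ).withDensity (gaussianPDF 0 (σ^2).toNNReal))
    rw [← gaussianReal_of_var_ne_zero 0 (hV_ne hσ)]
    infer_instance
  rw [h1, @pi_withDensity n (fun _ => volume) _ (fun _ => gaussianPDF 0 (σ^2).toNNReal)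
    (fun _ => measurable_gaussianPDF _ _) this]
  have he : ⇑(EuclideanSpace.equiv (Fin n) ℝ).symm
      = ⇑(MeasurableEquiv.toLp 2 (Fin n → ℝ)) := rfl
  rw [he]
  have hm := map_withDensity_equiv (MeasurableEquiv.toLp 2 (Fin n → ℝ))
    (Measure.pi fun _ => (volume : Measure ℝ))
    (fun x : EuclideanSpace ℝ (Fin n) => ∏ i, gaussianPDF 0 (σ^2).toNNReal (x i))
    measurable_gaussProd
  rw [show (fun a : Fin n → ℝ => ∏ i, gaussianPDF 0 (σ^2).toNNReal (a i))
      = (fun a : Fin n → ℝ => (fun x : EuclideanSpace ℝ (Fin n) =>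
          ∏ i, gaussianPDF 0 (σ^2).toNNReal (x i))
        ((MeasurableEquiv.toLp 2 (Fin n → ℝ)) a)) from rfl, hm, ← volume_pi,
    (show MeasurePreserving (MeasurableEquiv.toLp 2 (Fin n → ℝ)) volume volume from
      MeasurePreserving.symm _ (EuclideanSpace.volume_preserving_symm_measurableEquiv_toLp (Fin n))).map_eq]

lemma gaussDensity_radial (hσ : 0 < σ) (x : EuclideanSpace ℝ (Fin n)) :
    (∏ i, gaussianPDF 0 (σ^2).toNNReal (x i))
      = ENNReal.ofReal ((√(2 * π * σ^2))⁻¹ ^ n * rexp (-‖x‖^2 / (2 * σ^2))) := by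
  simp only [gaussianPDF]
  rw [← ENNReal.ofReal_prod_of_nonneg (fun i _ => gaussianPDFReal_nonneg _ _ _)]
  congr 1
  simp only [gaussianPDFReal, hV_coe hσ, sub_zero]
  rw [Finset.prod_mul_distrib, Finset.prod_const, ← Real.exp_sum, Finset.card_univ,
    Fintype.card_fin]
  congr 1
  rw [EuclideanSpace.norm_eq]
  simp only [Real.norm_eq_abs, sq_abs]
  rw [Real.sq_sqrt (Finset.sum_nonneg fun i _ => sq_nonneg _), ← Finset.sum_div,
    ← Finset.sum_neg_distrib]

lemma gaussMeasure_map_isometry (hσ : 0 < σ)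
    (T : EuclideanSpace ℝ (Fin n) ≃ₗᵢ[ℝ] EuclideanSpace ℝ (Fin n))
    (hT : MeasurePreserving T volume volume) :
    Measure.map T (gaussMeasure n σ) = gaussMeasure n σ := by
  have hrad := funext (gaussDensity_radial (n := n) hσ)
  rw [gaussMeasure_eq hσ, hrad]
  set ρ : EuclideanSpace ℝ (Fin n) → ℝ≥0∞ :=
    fun x => ENNReal.ofReal ((√(2 * π * σ^2))⁻¹ ^ n * rexp (-‖x‖^2 / (2 * σ^2))) with hρ
  have hρm : Measurable ρ := by
    apply Measurable.ennreal_ofReal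
    exact (measurable_const.mul ((measurable_norm.pow_const 2).neg.div_const _).exp)
  set e : EuclideanSpace ℝ (Fin n) ≃ᵐ EuclideanSpace ℝ (Fin n) :=
    T.toHomeomorph.toMeasurableEquiv with he
  have hce : ⇑e = ⇑T := rfl
  have hcomp : (fun a => ρ (e a)) = ρ := by
    funext a
    simp only [hρ, hce]
    rw [T.norm_map]
  rw [← hce, ← hcomp, map_withDensity_equiv e volume ρ hρm, hce, hT.map_eq]
  congr 1
  funext a
  simp only [hρ]
  rw [T.norm_map]

lemma gaussMeasure_map_add (hσ : 0 < σ) (δ : EuclideanSpace ℝ (Fin n)) :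
    Measure.map (fun ε => δ + ε) (gaussMeasure n σ)
      = (gaussMeasure n σ).withDensity
          (fun ε => ENNReal.ofReal (rexp (((inner ℝ ε δ : ℝ) - ‖δ‖^2 / 2) / σ^2))) := by
  have hrad := funext (gaussDensity_radial (n := n) hσ)
  rw [gaussMeasure_eq hσ, hrad]
  set c : ℝ := (√(2 * π * σ^2))⁻¹ ^ n with hc
  have hc0 : 0 ≤ c := by positivity
  set ρ : EuclideanSpace ℝ (Fin n) → ℝ≥0∞ :=
    fun x => ENNReal.ofReal (c * rexp (-‖x‖^2 / (2 * σ^2))) with hρ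
  set L : EuclideanSpace ℝ (Fin n) → ℝ≥0∞ :=
    fun ε => ENNReal.ofReal (rexp (((inner ℝ ε δ : ℝ) - ‖δ‖^2 / 2) / σ^2)) with hL
  have hρm : Measurable ρ :=
    (measurable_const.mul ((measurable_norm.pow_const 2).neg.div_const _).exp).ennreal_ofReal
  have hLm : Measurable L := by
    apply Measurable.ennreal_ofReal
    exact (((measurable_id.inner measurable_const).sub measurable_const).div_const _).exp
  set e : EuclideanSpace ℝ (Fin n) ≃ᵐ EuclideanSpace ℝ (Fin n) :=
    (MeasurableEquiv.addLeft δ) with he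
  have hce : ⇑e = fun ε => δ + ε := rfl
  have key : (fun a => (fun x => ρ (-δ + x)) (e a)) = ρ := by
    funext a
    simp only [hce, hρ]
    rw [neg_add_cancel_left]
  have hmap := map_withDensity_equiv e volume (fun x => ρ (-δ + x))
    (hρm.comp (measurable_const_add _))
  rw [key] at hmap
  have hvol : Measure.map (⇑e) (volume : Measure (EuclideanSpace ℝ (Fin n))) = volume :=
    (measurePreserving_add_left volume δ).map_eq
  rw [← hce, hmap, hvol]
  rw [← withDensity_mul _ hρm hLm]
  congr 1
  funext y
  simp only [ρ, L, Pi.mul_apply]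
  rw [← ENNReal.ofReal_mul (by positivity)]
  congr 1
  have hn : ‖-δ + y‖^2 = ‖y‖^2 - 2 * (inner ℝ y δ : ℝ) + ‖δ‖^2 := by
    rw [show -δ + y = y - δ by abel, norm_sub_sq_real]
  rw [hn, mul_assoc, ← Real.exp_add]
  congr 1
  have hσ2 : (σ:ℝ)^2 ≠ 0 := by positivity
  field_simp
  ring

instance gaussMeasure_prob (n : ℕ) (σ : ℝ) : IsProbabilityMeasure (gaussMeasure n σ) := by
  unfold gaussMeasure
  have he : ⇑(EuclideanSpace.equiv (Fin n) ℝ).symm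
      = ⇑(MeasurableEquiv.toLp 2 (Fin n → ℝ)) := rfl
  rw [he]
  exact Measure.isProbabilityMeasure_map
    (MeasurableEquiv.toLp 2 (Fin n → ℝ)).measurable.aemeasurable

lemma gaussianReal_toReal_Iic {v : ℝ≥0} (hv : v ≠ 0) (s : ℝ) :
    ((gaussianReal 0 v) (Iic s)).toReal = stdGaussCDF (s / √v) := by
  have hvpos : (0:ℝ) < √v := Real.sqrt_pos.2 (by exact_mod_cast hv.bot_lt)
  have hmap : (gaussianReal 0 1).map ((√v : ℝ) * ·) = gaussianReal 0 v := by
    rw [gaussianReal_map_const_mul]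
    congr 1
    · ring
    · ext
      push_cast
      rw [Real.sq_sqrt (by positivity)]
      ring
  rw [← hmap, Measure.map_apply (measurable_const_mul _) measurableSet_Iic]
  rw [show ((√v : ℝ) * ·) ⁻¹' (Iic s) = Iic (s / √v) from ?_, stdGaussCDF_eq]
  ext y
  simp only [mem_preimage, mem_Iic]
  rw [mul_comm, ← le_div_iff₀ hvpos]

lemma gaussMeasure_map_inner (hσ : 0 < σ) (w : EuclideanSpace ℝ (Fin n)) (hw : ‖w‖ = 1) :
    Measure.map (fun x : EuclideanSpace ℝ (Fin n) => (inner ℝ x w : ℝ)) (gaussMeasure n σ)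
      = gaussianReal 0 (σ^2).toNNReal := by
  have hn : 0 < n := by
    rcases Nat.eq_zero_or_pos n with h | h
    · exfalso
      subst h
      have : w = 0 := Subsingleton.elim _ _
      rw [this, norm_zero] at hw
      norm_num at hw
    · exact h
  set i₀ : Fin n := ⟨0, hn⟩
  have hcard : Module.finrank ℝ (EuclideanSpace ℝ (Fin n)) = Fintype.card (Fin n) := by simp
  have horth : Orthonormal ℝ (({i₀} : Set (Fin n)).restrict (fun _ => w)) := by
    constructor
    · intro i; exact hw
    · intro i j hij
      exact absurd (Subsingleton.elim i j) hij
  obtain ⟨b, hb⟩ := Orthonormal.exists_orthonormalBasis_extension_of_card_eq hcard horth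
  have hbw : b i₀ = w := hb i₀ rfl
  have hrot := gaussMeasure_map_isometry hσ b.repr b.measurePreserving_repr
  have hinner : (fun x : EuclideanSpace ℝ (Fin n) => (inner ℝ x w : ℝ))
      = (fun y : EuclideanSpace ℝ (Fin n) => y i₀) ∘ ⇑b.repr := by
    funext x
    simp only [Function.comp_apply]
    rw [b.repr_apply_apply, hbw, real_inner_comm]
  have hev : Measurable (fun y : EuclideanSpace ℝ (Fin n) => y i₀) := by
    exact (measurable_pi_apply i₀).comp (WithLp.measurable_ofLp 2 _)
  rw [hinner, ← Measure.map_map hev b.repr.continuous.measurable, hrot]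
  unfold gaussMeasure
  have he : ⇑(EuclideanSpace.equiv (Fin n) ℝ).symm
      = ⇑(MeasurableEquiv.toLp 2 (Fin n → ℝ)) := rfl
  rw [he, Measure.map_map hev (MeasurableEquiv.toLp 2 (Fin n → ℝ)).measurable]
  rw [show ((fun y : EuclideanSpace ℝ (Fin n) => y i₀)
      ∘ ⇑(MeasurableEquiv.toLp 2 (Fin n → ℝ))) = (fun x : Fin n → ℝ => x i₀) from rfl]
  exact pi_map_eval _ i₀

lemma gaussMeasure_inner_Iic (hσ : 0 < σ) {δ : EuclideanSpace ℝ (Fin n)} (hδ : δ ≠ 0) (t : ℝ) :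
    ((gaussMeasure n σ) {ε | (inner ℝ ε δ : ℝ) ≤ t}).toReal = stdGaussCDF (t / (σ * ‖δ‖)) := by
  have hδ0 : (0:ℝ) < ‖δ‖ := norm_pos_iff.2 hδ
  set w := ‖δ‖⁻¹ • δ with hwdef
  have hw : ‖w‖ = 1 := by
    rw [hwdef, norm_smul, norm_inv, norm_norm, inv_mul_cancel₀ hδ0.ne']
  have hset : {ε : EuclideanSpace ℝ (Fin n) | (inner ℝ ε δ : ℝ) ≤ t}
      = (fun ε : EuclideanSpace ℝ (Fin n) => (inner ℝ ε w : ℝ)) ⁻¹' (Iic (t / ‖δ‖)) := by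
    ext ε
    simp only [mem_setOf_eq, mem_preimage, mem_Iic, hwdef, inner_smul_right]
    rw [le_div_iff₀ hδ0, mul_comm, ← mul_assoc, mul_inv_cancel₀ hδ0.ne', one_mul]
  rw [hset, ← Measure.map_apply (by exact (measurable_id.inner measurable_const))
      measurableSet_Iic,
    gaussMeasure_map_inner hσ w hw, gaussianReal_toReal_Iic (hV_ne hσ)]
  congr 1
  rw [show √((σ^2).toNNReal : ℝ) = σ by rw [hV_coe hσ]; exact Real.sqrt_sq hσ.le]
  rw [div_div, mul_comm]

end Aux

section Main

open Real Set Filter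
open scoped NNReal ENNReal

set_option maxHeartbeats 1000000 in
theorem two_centroid_certification
    (n d : ℕ) (σ : ℝ) (hσ : 0 < σ)
    (f : EuclideanSpace ℝ (Fin n) → EuclideanSpace ℝ (Fin d))
    (hfm : Measurable f) (hf : ∀ x, ‖f x‖ ≤ 1)
    (c₁ c₂ : EuclideanSpace ℝ (Fin d)) (hc₁ : ‖c₁‖ = 1) (hc₂ : ‖c₂‖ = 1)
    (hne : c₁ ≠ c₂)
    (g : EuclideanSpace ℝ (Fin n) → EuclideanSpace ℝ (Fin d))
    (hg : ∀ x, g x = ∫ ε, f (x + ε) ∂(gaussMeasure n σ))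
    (φ : EuclideanSpace ℝ (Fin n) → ℝ)
    (hφ : ∀ x, φ x = inner ℝ (g x) (c₁ - c₂) / (2 * ‖c₁ - c₂‖) + 1 / 2)
    (x : EuclideanSpace ℝ (Fin n)) (hx : 1 / 2 < φ x) :
    ∀ δ : EuclideanSpace ℝ (Fin n), ‖δ‖ < σ * stdGaussCDFInv (φ x) →
      ‖g (x + δ) - c₁‖ < ‖g (x + δ) - c₂‖ := by
  intro δ hδlt
  classical
  set μ := gaussMeasure n σ with hμdef
  have hcne : c₁ - c₂ ≠ 0 := sub_ne_zero.2 hne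
  have hcpos : (0:ℝ) < ‖c₁ - c₂‖ := norm_pos_iff.2 hcne
  set u : EuclideanSpace ℝ (Fin d) := ‖c₁ - c₂‖⁻¹ • (c₁ - c₂) with hu
  have hu1 : ‖u‖ = 1 := by rw [hu, norm_smul, norm_inv, norm_norm, inv_mul_cancel₀ hcpos.ne']
  set f₀ : EuclideanSpace ℝ (Fin n) → ℝ :=
    fun ε => (inner ℝ (f (x + ε)) u : ℝ) / 2 + 1/2 with hf₀
  have hf₀m : Measurable f₀ :=
    (((hfm.comp (measurable_const_add x)).inner measurable_const).div_const 2).add_const _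
  have hf₀01 : ∀ ε, 0 ≤ f₀ ε ∧ f₀ ε ≤ 1 := by
    intro ε
    have h1 : |(inner ℝ (f (x + ε)) u : ℝ)| ≤ 1 := by
      calc |(inner ℝ (f (x+ε)) u : ℝ)| ≤ ‖f (x+ε)‖ * ‖u‖ := abs_real_inner_le_norm _ _
        _ ≤ 1 := by rw [hu1, mul_one]; exact hf _
    have h2 := abs_le.1 h1
    constructor <;> simp only [hf₀] <;> [linarith [h2.1]; linarith [h2.2]]
  -- the smoothed inner ℝ product as an integral
  have hgint : ∀ z, Integrable (fun ε => f (z + ε)) μ := fun z =>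
    Integrable.mono' (integrable_const 1)
      ((hfm.comp (measurable_const_add z)).aestronglyMeasurable)
      (ae_of_all _ fun ε => hf _)
  have hkey : ∀ z, (inner ℝ (g z) u : ℝ) / 2 + 1/2
      = ∫ ε, ((inner ℝ (f (z + ε)) u : ℝ) / 2 + 1/2) ∂μ := by
    intro z
    have h1 : (inner ℝ (g z) u : ℝ) = ∫ ε, (inner ℝ (f (z + ε)) u : ℝ) ∂μ := by
      rw [hg z, real_inner_comm, ← integral_inner (hgint z) u]
      exact integral_congr_ae (ae_of_all _ fun ε => real_inner_comm _ _)
    rw [integral_add (((hgint z).inner_const u).div_const 2) (integrable_const _),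
      integral_div, integral_const, probReal_univ, one_smul, ← h1]
  have hinner_u : ∀ G : EuclideanSpace ℝ (Fin d),
      (inner ℝ G u : ℝ) = ‖c₁ - c₂‖⁻¹ * inner ℝ G (c₁ - c₂) := fun G => by
    rw [hu, inner_smul_right]
  have hφx : φ x = ∫ ε, f₀ ε ∂μ := by
    rw [hφ x, ← hkey x, hinner_u]
    field_simp
  set p := φ x with hp
  have hf₀int : Integrable f₀ μ :=
    Integrable.mono' (integrable_const 1) hf₀m.aestronglyMeasurable
      (ae_of_all _ fun ε => by
        rw [Real.norm_eq_abs, abs_le]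
        exact ⟨by linarith [(hf₀01 ε).1], (hf₀01 ε).2⟩)
  have hple1 : p ≤ 1 := by
    rw [hφx]
    calc ∫ ε, f₀ ε ∂μ ≤ ∫ _ε, (1:ℝ) ∂μ :=
          integral_mono hf₀int (integrable_const 1) fun ε => (hf₀01 ε).2
      _ = 1 := by rw [integral_const, probReal_univ, one_smul]
  -- reduce the goal
  suffices hmain : 1/2 < ∫ ε, f₀ (δ + ε) ∂μ by
    have h2 : (inner ℝ (g (x+δ)) u : ℝ)/2 + 1/2 = ∫ ε, f₀ (δ + ε) ∂μ := by
      rw [hkey (x+δ)]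
      exact integral_congr_ae (ae_of_all _ fun ε => by rw [hf₀]; simp only [add_assoc])
    have h3 : 0 < (inner ℝ (g (x+δ)) u : ℝ) := by
      have h2' := hmain
      rw [← h2] at h2'
      linarith
    have h4 : 0 < (inner ℝ (g (x+δ)) (c₁ - c₂) : ℝ) := by
      have h5 := hinner_u (g (x+δ))
      have h6 : (inner ℝ (g (x+δ)) (c₁ - c₂) : ℝ) = ‖c₁ - c₂‖ * (inner ℝ (g (x+δ)) u : ℝ) := by
        rw [h5, ← mul_assoc, mul_inv_cancel₀ hcpos.ne', one_mul]
      rw [h6]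
      positivity
    have h7 : (inner ℝ (g (x+δ)) (c₁ - c₂) : ℝ)
        = inner ℝ (g (x+δ)) c₁ - inner ℝ (g (x+δ)) c₂ := inner_sub_right _ _ _
    have h8 : ‖g (x+δ) - c₁‖^2 < ‖g (x+δ) - c₂‖^2 := by
      rw [norm_sub_sq_real, norm_sub_sq_real, hc₁, hc₂]
      linarith
    nlinarith [norm_nonneg (g (x+δ) - c₁), norm_nonneg (g (x+δ) - c₂)]
  -- trivial case δ = 0
  by_cases hδ0 : δ = 0
  · subst hδ0
    simp only [zero_add]
    rw [← hφx]
    exact hx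
  -- now δ ≠ 0
  have hr0 : (0:ℝ) < ‖δ‖ := norm_pos_iff.2 hδ0
  set μδ := Measure.map (fun ε => δ + ε) μ with hμδ
  haveI : IsProbabilityMeasure μδ :=
    Measure.isProbabilityMeasure_map (measurable_const_add δ).aemeasurable
  have hmapint : ∫ ε, f₀ (δ + ε) ∂μ = ∫ ε, f₀ ε ∂μδ :=
    (integral_map (measurable_const_add δ).aemeasurable hf₀m.aestronglyMeasurable).symm
  rw [hmapint]
  set L : EuclideanSpace ℝ (Fin n) → ℝ :=
    fun ε => rexp (((inner ℝ ε δ : ℝ) - ‖δ‖^2/2)/σ^2) with hLdef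
  have hLm : Measurable L :=
    (((measurable_id.inner measurable_const).sub measurable_const).div_const _).exp
  have hLpos : ∀ ε, 0 < L ε := fun ε => exp_pos _
  have hCM : μδ = μ.withDensity (fun ε => ENNReal.ofReal (L ε)) := gaussMeasure_map_add hσ δ
  have hf₀intδ : Integrable f₀ μδ :=
    Integrable.mono' (integrable_const 1) hf₀m.aestronglyMeasurable
      (ae_of_all _ fun ε => by
        rw [Real.norm_eq_abs, abs_le]
        exact ⟨by linarith [(hf₀01 ε).1], (hf₀01 ε).2⟩)
  rcases lt_or_ge p 1 with hplt | hpge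
  · -- main case : 1/2 < p < 1, Neyman–Pearson argument
    obtain ⟨t, ht0, htp⟩ := stdGaussCDF_surjOn p hx hplt
    set a := stdGaussCDFInv p with hadef
    have haeq : stdGaussCDF a = p := by
      rw [hadef, stdGaussCDFInv]
      exact Function.invFun_eq ⟨t, htp⟩
    have ha0 : 0 < a := by
      by_contra h
      push_neg at h
      have := stdGaussCDF_mono h
      rw [haeq, stdGaussCDF_zero] at this
      linarith [hx]
    have hrb : ‖δ‖ < σ * a := hδlt
    set lam : ℝ := rexp ((σ*a*‖δ‖ - ‖δ‖^2/2)/σ^2) with hlamdef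
    have hlam0 : 0 < lam := exp_pos _
    set S : Set (EuclideanSpace ℝ (Fin n)) := {ε | (inner ℝ ε δ : ℝ) ≤ σ*a*‖δ‖} with hSdef
    have hSm : MeasurableSet S :=
      measurableSet_le (measurable_id.inner measurable_const) measurable_const
    have hμS : (μ S).toReal = p := by
      rw [hμdef, hSdef, gaussMeasure_inner_Iic hσ hδ0, ← haeq]
      congr 1
      field_simp
    have hμδS : (μδ S).toReal = stdGaussCDF (a - ‖δ‖/σ) := by
      rw [hμδ, Measure.map_apply (measurable_const_add δ) hSm]
      have hpre : (fun ε => δ + ε) ⁻¹' S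
          = {ε : EuclideanSpace ℝ (Fin n) | (inner ℝ ε δ : ℝ) ≤ σ*a*‖δ‖ - ‖δ‖^2} := by
        ext ε
        simp only [hSdef, mem_preimage, mem_setOf_eq, inner_add_left,
          real_inner_self_eq_norm_sq]
        constructor <;> intro h <;> linarith
      rw [hpre, hμdef, gaussMeasure_inner_Iic hσ hδ0]
      congr 1
      field_simp
    have hhalf : 1/2 < stdGaussCDF (a - ‖δ‖/σ) := by
      rw [← stdGaussCDF_zero]
      apply stdGaussCDF_strictMono
      have : ‖δ‖/σ < a := by
        rw [div_lt_iff₀ hσ]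
        linarith [hrb]
      linarith
    -- integrability facts
    have hIndint : Integrable (S.indicator fun _ => (1:ℝ)) μ :=
      (integrable_const 1).indicator hSm
    have hIndintδ : Integrable (S.indicator fun _ => (1:ℝ)) μδ :=
      (integrable_const 1).indicator hSm
    have hLint : Integrable L μ := by
      refine ⟨hLm.aestronglyMeasurable, ?_⟩
      rw [hasFiniteIntegral_iff_norm]
      have h1 : ∫⁻ ε, ENNReal.ofReal ‖L ε‖ ∂μ = ∫⁻ ε, ENNReal.ofReal (L ε) ∂μ :=
        lintegral_congr fun ε => by rw [Real.norm_eq_abs, abs_of_pos (hLpos ε)]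
      rw [h1]
      have h2 : ∫⁻ ε, ENNReal.ofReal (L ε) ∂μ = μδ univ := by
        rw [hCM, withDensity_apply _ MeasurableSet.univ, setLIntegral_univ]
      rw [h2, measure_univ]
      exact ENNReal.one_lt_top
    have habs : ∀ ε, |f₀ ε - S.indicator (fun _ => (1:ℝ)) ε| ≤ 1 := by
      intro ε
      have h01 := hf₀01 ε
      by_cases hεS : ε ∈ S
      · rw [indicator_of_mem hεS, abs_le]; constructor <;> linarith
      · rw [indicator_of_notMem hεS, abs_le]; constructor <;> linarith
    -- the density transfer
    have htrans : ∀ F : EuclideanSpace ℝ (Fin n) → ℝ,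
        ∫ ε, F ε ∂μδ = ∫ ε, L ε * F ε ∂μ := by
      intro F
      rw [hCM]
      have h1 : (fun ε => ENNReal.ofReal (L ε))
          = fun ε => (((fun ε => (L ε).toNNReal) ε : ℝ≥0) : ℝ≥0∞) := rfl
      rw [h1, integral_withDensity_eq_integral_smul
        (hLm.real_toNNReal) F]
      refine integral_congr_ae (ae_of_all _ fun ε => ?_)
      show (L ε).toNNReal • F ε = L ε * F ε
      rw [NNReal.smul_def, smul_eq_mul, Real.coe_toNNReal _ (hLpos ε).le]
    -- Neyman–Pearson pointwise comparison, integrated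
    have hnp : lam * ∫ ε, (f₀ ε - S.indicator (fun _ => 1) ε) ∂μ
        ≤ ∫ ε, (f₀ ε - S.indicator (fun _ => 1) ε) ∂μδ := by
      rw [htrans _, ← integral_const_mul]
      apply integral_mono
      · exact ((hf₀int.sub hIndint).const_mul lam)
      · refine Integrable.mono' hLint
          ((hLm.mul (hf₀m.sub (measurable_const.indicator hSm))).aestronglyMeasurable)
          (ae_of_all _ fun ε => ?_)
        rw [Real.norm_eq_abs, abs_mul, abs_of_pos (hLpos ε)]
        calc L ε * |f₀ ε - S.indicator (fun _ => 1) ε| ≤ L ε * 1 := by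
              exact mul_le_mul_of_nonneg_left (habs ε) (hLpos ε).le
          _ = L ε := mul_one _
      · intro ε
        have h01 := hf₀01 ε
        show lam * (f₀ ε - S.indicator (fun _ => 1) ε)
          ≤ L ε * (f₀ ε - S.indicator (fun _ => 1) ε)
        by_cases hεS : ε ∈ S
        · have hle : (inner ℝ ε δ : ℝ) ≤ σ*a*‖δ‖ := hεS
          have hLle : L ε ≤ lam := by
            rw [hLdef, hlamdef]
            apply exp_le_exp.2
            gcongr
          rw [indicator_of_mem hεS]
          nlinarith [hLpos ε]
        · have hgt : σ*a*‖δ‖ < (inner ℝ ε δ : ℝ) := not_le.1 hεS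
          have hLge : lam ≤ L ε := by
            rw [hLdef, hlamdef]
            apply exp_le_exp.2
            gcongr
          rw [indicator_of_notMem hεS]
          nlinarith [hLpos ε]
    -- put together
    have hindμ : ∫ ε, S.indicator (fun _ => (1:ℝ)) ε ∂μ = (μ S).toReal := by
      rw [integral_indicator_const (1:ℝ) hSm, smul_eq_mul, mul_one]
      rfl
    have hindμδ : ∫ ε, S.indicator (fun _ => (1:ℝ)) ε ∂μδ = (μδ S).toReal := by
      rw [integral_indicator_const (1:ℝ) hSm, smul_eq_mul, mul_one]
      rfl
    have hsubμ : ∫ ε, (f₀ ε - S.indicator (fun _ => 1) ε) ∂μ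
        = (∫ ε, f₀ ε ∂μ) - (μ S).toReal := by
      rw [integral_sub hf₀int hIndint, hindμ]
    have hsubμδ : ∫ ε, (f₀ ε - S.indicator (fun _ => 1) ε) ∂μδ
        = (∫ ε, f₀ ε ∂μδ) - (μδ S).toReal := by
      rw [integral_sub hf₀intδ hIndintδ, hindμδ]
    rw [hsubμ, hsubμδ, hμS, hμδS, ← hφx, sub_self, mul_zero] at hnp
    linarith
  · -- boundary case p = 1
    have hpeq : (1:ℝ) = p := le_antisymm hpge hple1
    have hone : ∀ᵐ ε ∂μ, f₀ ε = 1 := by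
      have hint : Integrable (fun ε => 1 - f₀ ε) μ := (integrable_const 1).sub hf₀int
      have hzero : ∫ ε, (1 - f₀ ε) ∂μ = 0 := by
        rw [integral_sub (integrable_const 1) hf₀int, integral_const, probReal_univ,
          one_smul, ← hφx, hpeq, sub_self]
      have h := (integral_eq_zero_iff_of_nonneg
        (fun ε => by show (0:ℝ) ≤ 1 - f₀ ε; linarith [(hf₀01 ε).2]) hint).1 hzero
      filter_upwards [h] with ε hε
      have : 1 - f₀ ε = 0 := hε
      linarith
    have hac : μδ ≪ μ := by
      rw [hCM]
      exact withDensity_absolutelyContinuous _ _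
    have honeδ : ∀ᵐ ε ∂μδ, f₀ ε = 1 := ae_iff.2 (hac (ae_iff.1 hone))
    rw [integral_congr_ae (g := fun _ => (1:ℝ)) honeδ, integral_const, probReal_univ,
      one_smul]
    norm_num

end Main
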